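/- arXiv:2411.05481 — 4 statements merged into one kernel-verified Lean document; each statement's English description precedes it below -/
import Mathlib

section
/- Let Θ̃(t_{k+1}) = (I - η U(t_k) - η S) Θ̃(t_k) where U(t_k) = Φ(t_k)Φ(t_k)^T with ‖Φ(t_k)‖ ≤ 1, S is a symmetric positive semidefinite matrix of full rank (hence positive definite), and η = λ_min(S) / (λ_max(U(t_k)) + λ_max(S))². Then ‖Θ̃(t_k)‖ ≤ (√(1 - λ_min(S)²/(1 + λ_max(S))²))^k ‖Θ̃(t_0)‖, i.e., the estimation error converges to zero exponentially. -/
open Matrix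

/-- Largest eigenvalue of a hermitian real matrix. -/
noncomputable def eigMax {n : ℕ} (A : Matrix (Fin n) (Fin n) ℝ)
    (hA : A.IsHermitian) : ℝ := ⨆ i, hA.eigenvalues i

/-- Smallest eigenvalue of a hermitian real matrix. -/
noncomputable def eigMin {n : ℕ} (A : Matrix (Fin n) (Fin n) ℝ)
    (hA : A.IsHermitian) : ℝ := ⨅ i, hA.eigenvalues i

section Aux

lemma eigBasis_apply {n : ℕ} (A : Matrix (Fin n) (Fin n) ℝ) (hA : A.IsHermitian) (j : Fin n) :
    Matrix.toEuclideanLin A (hA.eigenvectorBasis j) = hA.eigenvalues j • hA.eigenvectorBasis j := by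
  simp only [Matrix.IsHermitian.eigenvectorBasis, Matrix.IsHermitian.eigenvalues,
    Matrix.IsHermitian.eigenvalues₀, OrthonormalBasis.reindex_apply]
  exact (isHermitian_iff_isSymmetric.1 hA).apply_eigenvectorBasis _ _

lemma eig_eq_qf {n : ℕ} (A : Matrix (Fin n) (Fin n) ℝ) (hA : A.IsHermitian) (j : Fin n) :
    hA.eigenvalues j
      = inner ℝ (hA.eigenvectorBasis j) (Matrix.toEuclideanLin A (hA.eigenvectorBasis j)) := by
  rw [eigBasis_apply, real_inner_smul_right, real_inner_self_eq_norm_mul_norm,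
    hA.eigenvectorBasis.orthonormal.1 j]
  ring

lemma parseval_sq {n : ℕ} (b : OrthonormalBasis (Fin n) ℝ (EuclideanSpace ℝ (Fin n)))
    (x : EuclideanSpace ℝ (Fin n)) :
    ‖x‖^2 = ∑ i, (inner ℝ (b i) x : ℝ)^2 := by
  have h := b.sum_inner_mul_inner x x
  rw [real_inner_self_eq_norm_sq] at h
  rw [← h]
  congr 1; ext i; rw [real_inner_comm x (b i), sq]

lemma qf_eq_sum {n : ℕ} (A : Matrix (Fin n) (Fin n) ℝ) (hA : A.IsHermitian)
    (x : EuclideanSpace ℝ (Fin n)) :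
    (inner ℝ x (Matrix.toEuclideanLin A x) : ℝ)
      = ∑ i, hA.eigenvalues i * (inner ℝ (hA.eigenvectorBasis i) x : ℝ)^2 := by
  rw [← (hA.eigenvectorBasis).sum_inner_mul_inner x (Matrix.toEuclideanLin A x)]
  congr 1; ext i
  have h1 : (inner ℝ (hA.eigenvectorBasis i) (Matrix.toEuclideanLin A x) : ℝ)
      = hA.eigenvalues i * inner ℝ (hA.eigenvectorBasis i) x := by
    rw [← (isHermitian_iff_isSymmetric.1 hA) (hA.eigenvectorBasis i) x,
      eigBasis_apply A hA i, inner_smul_left]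
    simp
  rw [h1, real_inner_comm x]; ring

lemma exists_eigMin {n : ℕ} [NeZero n] (A : Matrix (Fin n) (Fin n) ℝ) (hA : A.IsHermitian) :
    ∃ j, eigMin A hA = hA.eigenvalues j ∧ ∀ i, hA.eigenvalues j ≤ hA.eigenvalues i := by
  obtain ⟨j, hj⟩ := Finite.exists_min hA.eigenvalues
  exact ⟨j, le_antisymm (ciInf_le (Finite.bddBelow_range _) j) (le_ciInf hj), hj⟩

lemma exists_eigMax {n : ℕ} [NeZero n] (A : Matrix (Fin n) (Fin n) ℝ) (hA : A.IsHermitian) :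
    ∃ j, eigMax A hA = hA.eigenvalues j ∧ ∀ i, hA.eigenvalues i ≤ hA.eigenvalues j := by
  obtain ⟨j, hj⟩ := Finite.exists_max hA.eigenvalues
  exact ⟨j, le_antisymm (ciSup_le hj) (le_ciSup (Finite.bddAbove_range _) j), hj⟩

/-- Rayleigh quotient bounds. -/
lemma rayleigh_le {n : ℕ} [NeZero n] (A : Matrix (Fin n) (Fin n) ℝ) (hA : A.IsHermitian)
    (x : EuclideanSpace ℝ (Fin n)) :
    (inner ℝ x (Matrix.toEuclideanLin A x) : ℝ) ≤ eigMax A hA * ‖x‖^2 := by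
  obtain ⟨j, hje, hj⟩ := exists_eigMax A hA
  rw [qf_eq_sum, parseval_sq hA.eigenvectorBasis, hje, Finset.mul_sum]
  refine Finset.sum_le_sum fun i _ => ?_
  exact mul_le_mul_of_nonneg_right (hj i) (sq_nonneg _)

lemma rayleigh_ge {n : ℕ} [NeZero n] (A : Matrix (Fin n) (Fin n) ℝ) (hA : A.IsHermitian)
    (x : EuclideanSpace ℝ (Fin n)) :
    eigMin A hA * ‖x‖^2 ≤ (inner ℝ x (Matrix.toEuclideanLin A x) : ℝ) := by
  obtain ⟨j, hje, hj⟩ := exists_eigMin A hA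
  rw [qf_eq_sum, parseval_sq hA.eigenvectorBasis, hje, Finset.mul_sum]
  refine Finset.sum_le_sum fun i _ => ?_
  exact mul_le_mul_of_nonneg_right (hj i) (sq_nonneg _)

lemma qf_vecMulVec {n : ℕ} (v x : EuclideanSpace ℝ (Fin n)) :
    (inner ℝ x (Matrix.toEuclideanLin (vecMulVec v v) x) : ℝ) = (inner ℝ v x : ℝ)^2 := by
  simp only [toEuclideanLin_apply, PiLp.inner_apply, RCLike.inner_apply, conj_trivial]
  simp only [mulVec, dotProduct,
    vecMulVec_apply]
  rw [sq, Finset.sum_mul]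
  congr 1; ext i
  rw [Finset.sum_mul, Finset.mul_sum]
  congr 1; ext j
  ring

lemma eig_pos_of_rank {n : ℕ} (S : Matrix (Fin n) (Fin n) ℝ) (hS : S.PosSemidef)
    (hrank : S.rank = n) (i : Fin n) : 0 < hS.1.eigenvalues i := by
  rcases lt_or_eq_of_le (hS.eigenvalues_nonneg i) with h | h
  · exact h
  · exfalso
    have h0 : hS.1.eigenvalues i = 0 := h.symm
    have hc := hS.1.rank_eq_card_non_zero_eigs
    rw [hrank] at hc
    have hlt : Fintype.card {j // hS.1.eigenvalues j ≠ 0} < Fintype.card (Fin n) :=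
      Fintype.card_subtype_lt (x := i) (by simp [h0])
    rw [Fintype.card_fin, ← hc] at hlt
    omega

lemma scalar_ineq (m MS MU μ : ℝ) (hm : 0 < m) (hmMS : m ≤ MS) (hMU0 : 0 ≤ MU) (hMU1 : MU ≤ 1)
    (hμl : m ≤ μ) (hμu : μ ≤ MU + MS) :
    (1 - m / (MU + MS)^2 * μ)^2 ≤ 1 - m^2/(1+MS)^2 := by
  set L := MU + MS with hLdef
  have hLpos : 0 < L := by simp only [hLdef]; linarith
  have hmL : m ≤ L := by simp only [hLdef]; linarith
  have hL1 : L ≤ 1 + MS := by simp only [hLdef]; linarith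
  set a := m / L^2 * μ with ha
  have ha_lo : m^2/L^2 ≤ a := by
    have hpos : (0:ℝ) ≤ m / L^2 := by positivity
    calc m^2/L^2 = m/L^2 * m := by ring
      _ ≤ m/L^2 * μ := mul_le_mul_of_nonneg_left hμl hpos
      _ = a := ha.symm
  have ha_hi : a ≤ m / L := by
    have : m / L^2 * L = m / L := by
      field_simp
    rw [ha, ← this]
    exact mul_le_mul_of_nonneg_left hμu (by positivity)
  have hmL1 : m / L ≤ 1 := (div_le_one hLpos).2 hmL
  have h1a : 0 ≤ 1 - a := by linarith
  have hb1 : m^2 / L^2 ≤ 1 := by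
    rw [div_le_one (pow_pos hLpos 2)]
    nlinarith
  have hb0 : 0 < m^2 / L^2 := by positivity
  have hsq : (1 - a)^2 ≤ (1 - m^2/L^2)^2 := by
    apply sq_le_sq' <;> linarith
  have hself : (1 - m^2/L^2)^2 ≤ 1 - m^2/L^2 := by nlinarith
  have hmono : m^2/(1+MS)^2 ≤ m^2/L^2 := by
    exact div_le_div_of_nonneg_left (sq_nonneg m) (pow_pos hLpos 2) (by nlinarith)
  linarith

end Aux

/-- exponential convergence of the concurrent-learning estimator. With
`Θ̃(k+1) = (I − ηU(k) − ηS) Θ̃(k)`, `U(k) = Φ(k)Φ(k)ᵀ`, `‖Φ(k)‖ ≤ 1`, `S` symmetric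
PSD of full rank (hence positive definite), and
`η = λ_min(S) / (λ_max(U(k)) + λ_max(S))²`, one has
`‖Θ̃(k)‖ ≤ (√(1 − λ_min(S)² / (1 + λ_max(S))²))ᵏ ‖Θ̃(0)‖`. -/
theorem stmt0 {n : ℕ}
    (Φ : ℕ → EuclideanSpace ℝ (Fin n)) (hΦ : ∀ k, ‖Φ k‖ ≤ 1)
    (U : ℕ → Matrix (Fin n) (Fin n) ℝ)
    (hUdef : ∀ k, U k = vecMulVec (Φ k) (Φ k))
    (hU : ∀ k, (U k).IsHermitian)
    (S : Matrix (Fin n) (Fin n) ℝ) (hS : S.PosSemidef) (hrank : S.rank = n)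
    (η : ℕ → ℝ)
    (hη : ∀ k, η k = eigMin S hS.1 / (eigMax (U k) (hU k) + eigMax S hS.1) ^ 2)
    (Θ : ℕ → EuclideanSpace ℝ (Fin n))
    (hrec : ∀ k, Θ (k + 1) = Matrix.toEuclideanLin (1 - η k • U k - η k • S) (Θ k)) :
    ∀ k, ‖Θ k‖ ≤
      (Real.sqrt (1 - eigMin S hS.1 ^ 2 / (1 + eigMax S hS.1) ^ 2)) ^ k * ‖Θ 0‖ := by
  rcases Nat.eq_zero_or_pos n with hn | hn
  · subst hn
    intro k
    haveI : Subsingleton (EuclideanSpace ℝ (Fin 0)) := inferInstance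
    rw [Subsingleton.elim (Θ k) 0, Subsingleton.elim (Θ 0) 0]
    simp
  haveI : NeZero n := ⟨hn.ne'⟩
  set m := eigMin S hS.1 with hmdef
  set MS := eigMax S hS.1 with hMSdef
  -- basic facts about S
  have hm_pos : 0 < m := by
    obtain ⟨j, hje, _⟩ := exists_eigMin S hS.1
    rw [hmdef, hje]
    exact eig_pos_of_rank S hS hrank j
  have hmMS : m ≤ MS := by
    obtain ⟨j, hje, hj⟩ := exists_eigMin S hS.1
    obtain ⟨j', hje', hj'⟩ := exists_eigMax S hS.1
    rw [hmdef, hMSdef, hje, hje']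
    exact (hj j').trans (le_refl _)
  set r := Real.sqrt (1 - m^2 / (1 + MS)^2) with hrdef
  have hr2_nonneg : 0 ≤ 1 - m^2 / (1 + MS)^2 := by
    have h1 : m ≤ 1 + MS := by linarith
    have : m^2 / (1 + MS)^2 ≤ 1 := by
      rw [div_le_one (pow_pos (by linarith : (0:ℝ) < 1 + MS) 2)]
      nlinarith
    linarith
  -- key one-step contraction
  have key : ∀ k, ‖Θ (k+1)‖ ≤ r * ‖Θ k‖ := by
    intro k
    set MU := eigMax (U k) (hU k) with hMUdef
    -- bounds on MU
    have hqU : ∀ y : EuclideanSpace ℝ (Fin n),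
        (inner ℝ y (Matrix.toEuclideanLin (U k) y) : ℝ) = (inner ℝ (Φ k) y : ℝ)^2 := by
      intro y; rw [hUdef k]; exact qf_vecMulVec (Φ k) y
    have hMU0 : 0 ≤ MU := by
      obtain ⟨j, hje, _⟩ := exists_eigMax (U k) (hU k)
      rw [hMUdef, hje, eig_eq_qf (U k) (hU k) j, hqU]
      exact sq_nonneg _
    have hMU1 : MU ≤ 1 := by
      obtain ⟨j, hje, _⟩ := exists_eigMax (U k) (hU k)
      rw [hMUdef, hje, eig_eq_qf (U k) (hU k) j, hqU]
      have hcs := real_inner_mul_inner_self_le (Φ k) ((hU k).eigenvectorBasis j)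
      rw [real_inner_self_eq_norm_mul_norm, real_inner_self_eq_norm_mul_norm,
        (hU k).eigenvectorBasis.orthonormal.1 j] at hcs
      have hΦk := hΦ k
      have hΦ0 : 0 ≤ ‖Φ k‖ := norm_nonneg _
      nlinarith [hcs]
    -- the combined matrix B and its eigen-data
    set B := U k + S with hBdef
    have hB : B.IsHermitian := (hU k).add hS.1
    set b := hB.eigenvectorBasis with hbdef
    set μ := hB.eigenvalues with hμdef
    -- eigenvalues of B lie in [m, MU + MS]
    have hμ_bounds : ∀ j, m ≤ μ j ∧ μ j ≤ MU + MS := by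
      intro j
      have hsplit : (inner ℝ (b j) (Matrix.toEuclideanLin B (b j)) : ℝ)
          = (inner ℝ (b j) (Matrix.toEuclideanLin (U k) (b j)) : ℝ)
            + (inner ℝ (b j) (Matrix.toEuclideanLin S (b j)) : ℝ) := by
        rw [hBdef, map_add]
        exact inner_add_right _ _ _
      have hnorm : ‖b j‖ = 1 := hB.eigenvectorBasis.orthonormal.1 j
      have hμval : μ j = (inner ℝ (b j) (Matrix.toEuclideanLin B (b j)) : ℝ) :=
        eig_eq_qf B hB j
      have hSlo : m * 1 ≤ (inner ℝ (b j) (Matrix.toEuclideanLin S (b j)) : ℝ) := by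
        have := rayleigh_ge S hS.1 (b j)
        rwa [hnorm, one_pow, ← hmdef] at this
      have hShi : (inner ℝ (b j) (Matrix.toEuclideanLin S (b j)) : ℝ) ≤ MS * 1 := by
        have := rayleigh_le S hS.1 (b j)
        rwa [hnorm, one_pow, ← hMSdef] at this
      have hUlo : 0 ≤ (inner ℝ (b j) (Matrix.toEuclideanLin (U k) (b j)) : ℝ) := by
        rw [hqU]; exact sq_nonneg _
      have hUhi : (inner ℝ (b j) (Matrix.toEuclideanLin (U k) (b j)) : ℝ) ≤ MU * 1 := by
        have := rayleigh_le (U k) (hU k) (b j)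
        rwa [hnorm, one_pow, ← hMUdef] at this
      constructor
      · rw [hμval, hsplit]; linarith
      · rw [hμval, hsplit]; linarith
    -- action of the iteration matrix on the eigenbasis of B
    set M := (1 : Matrix (Fin n) (Fin n) ℝ) - η k • U k - η k • S with hMdef
    have hMB : M = 1 - η k • B := by
      rw [hMdef, hBdef, smul_add, sub_sub]
    have hMherm : M.IsHermitian := by
      rw [hMB]
      refine Matrix.IsHermitian.sub Matrix.isHermitian_one ?_
      unfold Matrix.IsHermitian
      rw [conjTranspose_smul, hB.eq]
      simp
    have happ : ∀ j, Matrix.toEuclideanLin M (b j) = (1 - η k * μ j) • b j := by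
      intro j
      rw [hMB, map_sub, _root_.map_smul]
      simp only [LinearMap.sub_apply, LinearMap.smul_apply]
      rw [eigBasis_apply B hB j]
      have h1 : Matrix.toEuclideanLin (1 : Matrix (Fin n) (Fin n) ℝ) (b j) = b j := by
        rw [toEuclideanLin_apply]
        simp
      rw [h1, smul_smul, sub_smul, one_smul]
    have hcoord : ∀ j, (inner ℝ (b j) (Matrix.toEuclideanLin M (Θ k)) : ℝ)
        = (1 - η k * μ j) * (inner ℝ (b j) (Θ k) : ℝ) := by
      intro j
      rw [← (isHermitian_iff_isSymmetric.1 hMherm) (b j) (Θ k), happ j,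
        real_inner_smul_left]
    -- scalar contraction per eigendirection
    have hscal : ∀ j, (1 - η k * μ j)^2 ≤ 1 - m^2/(1+MS)^2 := by
      intro j
      obtain ⟨hlo, hhi⟩ := hμ_bounds j
      have h := scalar_ineq m MS MU (μ j) hm_pos hmMS hMU0 hMU1 hlo hhi
      rw [hη k]
      exact h
    -- squared-norm contraction
    have hnorm_sq : ‖Θ (k+1)‖^2 ≤ (1 - m^2/(1+MS)^2) * ‖Θ k‖^2 := by
      rw [hrec k, ← hMdef, parseval_sq b (Matrix.toEuclideanLin M (Θ k)),
        parseval_sq b (Θ k), Finset.mul_sum]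
      refine Finset.sum_le_sum fun j _ => ?_
      rw [hcoord j, mul_pow]
      exact mul_le_mul_of_nonneg_right (hscal j) (sq_nonneg _)
    -- pass to norms
    have h1 : ‖Θ (k+1)‖ = Real.sqrt (‖Θ (k+1)‖^2) := (Real.sqrt_sq (norm_nonneg _)).symm
    rw [h1]
    calc Real.sqrt (‖Θ (k+1)‖^2) ≤ Real.sqrt ((1 - m^2/(1+MS)^2) * ‖Θ k‖^2) :=
          Real.sqrt_le_sqrt hnorm_sq
      _ = r * ‖Θ k‖ := by
          rw [Real.sqrt_mul hr2_nonneg, Real.sqrt_sq (norm_nonneg _), hrdef]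
  -- conclude by induction
  intro k
  induction k with
  | zero => simp
  | succ k ih =>
    calc ‖Θ (k+1)‖ ≤ r * ‖Θ k‖ := key k
      _ ≤ r * ((r ^ k) * ‖Θ 0‖) :=
          mul_le_mul_of_nonneg_left ih (Real.sqrt_nonneg _)
      _ = r ^ (k+1) * ‖Θ 0‖ := by ring
end

section
/- Let matrices A(k) = I − ηU(k) − ηS with U(k), S symmetric PSD, S positive definite, ‖Φ(k)‖ ≤ 1 so λ_max(U(k)) ≤ 1, and η = λ_min(S)/(λ_max(U(k)) + λ_max(S))². Then the spectral norm of A(k) is at most √(1 − λ_min(S)²/(1 + λ_max(S))²) < 1. -/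
open Matrix

open scoped RealInnerProductSpace
set_option maxHeartbeats 1000000

section aux
variable {n : ℕ} {M : Matrix (Fin n) (Fin n) ℝ}

lemma clm_apply_basis (hM : M.IsHermitian) (j : Fin n) :
    Matrix.toEuclideanCLM (𝕜 := ℝ) M (hM.eigenvectorBasis j)
      = hM.eigenvalues j • hM.eigenvectorBasis j := by
  apply (WithLp.equiv 2 _).injective
  simp [ofLp_toEuclideanCLM, hM.mulVec_eigenvectorBasis j]

lemma clm_selfAdjoint (hM : M.IsHermitian) :
    ContinuousLinearMap.adjoint (Matrix.toEuclideanCLM (𝕜 := ℝ) M)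
      = Matrix.toEuclideanCLM (𝕜 := ℝ) M := by
  rw [← ContinuousLinearMap.star_eq_adjoint, ← map_star]
  exact congrArg _ hM

lemma repr_clm_apply (hM : M.IsHermitian) (x : EuclideanSpace ℝ (Fin n)) (i : Fin n) :
    hM.eigenvectorBasis.repr (Matrix.toEuclideanCLM (𝕜 := ℝ) M x) i
      = hM.eigenvalues i * hM.eigenvectorBasis.repr x i := by
  rw [OrthonormalBasis.repr_apply_apply, OrthonormalBasis.repr_apply_apply,
    ← ContinuousLinearMap.adjoint_inner_left (Matrix.toEuclideanCLM (𝕜 := ℝ) M),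
    clm_selfAdjoint hM, clm_apply_basis hM i, real_inner_smul_left]

lemma eigMin_le (hM : M.IsHermitian) (i : Fin n) : eigMin M hM ≤ hM.eigenvalues i :=
  ciInf_le (Set.Finite.bddBelow (Set.finite_range _)) i

lemma le_eigMax (hM : M.IsHermitian) (i : Fin n) : hM.eigenvalues i ≤ eigMax M hM :=
  le_ciSup (Set.Finite.bddAbove (Set.finite_range _)) i

lemma inner_clm_eq_sum (hM : M.IsHermitian) (x : EuclideanSpace ℝ (Fin n)) :
    (inner ℝ x (Matrix.toEuclideanCLM (𝕜 := ℝ) M x) : ℝ)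
      = ∑ i, hM.eigenvalues i * (hM.eigenvectorBasis.repr x i)^2 := by
  rw [← LinearIsometryEquiv.inner_map_map hM.eigenvectorBasis.repr]
  simp only [PiLp.inner_apply, RCLike.inner_apply, starRingEnd_apply, star_trivial,
    repr_clm_apply hM]
  congr 1; ext i; ring

lemma norm_sq_eq_sum (hM : M.IsHermitian) (x : EuclideanSpace ℝ (Fin n)) :
    ‖x‖^2 = ∑ i, (hM.eigenvectorBasis.repr x i)^2 := by
  rw [← hM.eigenvectorBasis.repr.norm_map x, EuclideanSpace.norm_eq,
    Real.sq_sqrt (by positivity)]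
  simp [pow_two, Real.norm_eq_abs, abs_mul_abs_self]

lemma rayleigh_le_s8 (hM : M.IsHermitian) (x : EuclideanSpace ℝ (Fin n)) :
    (inner ℝ x (Matrix.toEuclideanCLM (𝕜 := ℝ) M x) : ℝ) ≤ eigMax M hM * ‖x‖^2 := by
  rw [inner_clm_eq_sum hM, norm_sq_eq_sum hM, Finset.mul_sum]
  exact Finset.sum_le_sum fun i _ =>
    mul_le_mul_of_nonneg_right (le_eigMax hM i) (sq_nonneg _)

lemma rayleigh_ge_s8 (hM : M.IsHermitian) (x : EuclideanSpace ℝ (Fin n)) :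
    eigMin M hM * ‖x‖^2 ≤ (inner ℝ x (Matrix.toEuclideanCLM (𝕜 := ℝ) M x) : ℝ) := by
  rw [inner_clm_eq_sum hM, norm_sq_eq_sum hM, Finset.mul_sum]
  exact Finset.sum_le_sum fun i _ =>
    mul_le_mul_of_nonneg_right (eigMin_le hM i) (sq_nonneg _)

lemma eig_eq_inner (hM : M.IsHermitian) (j : Fin n) :
    hM.eigenvalues j
      = (inner ℝ (hM.eigenvectorBasis j)
          (Matrix.toEuclideanCLM (𝕜 := ℝ) M (hM.eigenvectorBasis j)) : ℝ) := by
  rw [clm_apply_basis hM j, real_inner_smul_right, real_inner_self_eq_norm_sq,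
    hM.eigenvectorBasis.orthonormal.1 j]
  ring

lemma norm_clm_le (hM : M.IsHermitian) {c : ℝ} (hc : 0 ≤ c)
    (h : ∀ i, |hM.eigenvalues i| ≤ c) :
    ‖Matrix.toEuclideanCLM (𝕜 := ℝ) M‖ ≤ c := by
  refine ContinuousLinearMap.opNorm_le_bound _ hc fun x => ?_
  have h2 : ‖Matrix.toEuclideanCLM (𝕜 := ℝ) M x‖^2 ≤ (c * ‖x‖)^2 := by
    rw [norm_sq_eq_sum hM, mul_pow, norm_sq_eq_sum hM x, Finset.mul_sum]
    refine Finset.sum_le_sum fun i _ => ?_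
    rw [repr_clm_apply hM, mul_pow]
    exact mul_le_mul_of_nonneg_right (by
      have := h i; nlinarith [abs_nonneg (hM.eigenvalues i), sq_abs (hM.eigenvalues i)])
      (sq_nonneg _)
  calc ‖Matrix.toEuclideanCLM (𝕜 := ℝ) M x‖
      = Real.sqrt (‖Matrix.toEuclideanCLM (𝕜 := ℝ) M x‖^2) :=
        (Real.sqrt_sq (norm_nonneg _)).symm
    _ ≤ Real.sqrt ((c * ‖x‖)^2) := Real.sqrt_le_sqrt h2
    _ = c * ‖x‖ := Real.sqrt_sq (by positivity)

lemma eigMin_pos (hM : M.PosDef) [Nonempty (Fin n)] : 0 < eigMin M hM.1 := by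
  obtain ⟨i₀, hi₀⟩ := Finite.exists_min hM.1.eigenvalues
  have : eigMin M hM.1 = hM.1.eigenvalues i₀ :=
    le_antisymm (eigMin_le hM.1 i₀) (le_ciInf hi₀)
  rw [this]
  exact hM.eigenvalues_pos i₀

end aux

/-- contraction of the error-transition matrix. With
`A(k) = I − ηU(k) − ηS`, `U(k) = Φ(k)Φ(k)ᵀ`, `‖Φ(k)‖ ≤ 1` (so `λ_max(U(k)) ≤ 1`),
`S` positive definite, and `η = λ_min(S)/(λ_max(U(k)) + λ_max(S))²`, the spectral
norm of `A(k)` is at most `√(1 − λ_min(S)²/(1 + λ_max(S))²) < 1`. -/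
theorem stmt8 {n : ℕ} (hn : 0 < n)
    (Φ : ℕ → EuclideanSpace ℝ (Fin n)) (hΦ : ∀ k, ‖Φ k‖ ≤ 1)
    (U : ℕ → Matrix (Fin n) (Fin n) ℝ)
    (hUdef : ∀ k, U k = vecMulVec (Φ k) (Φ k))
    (hU : ∀ k, (U k).PosSemidef)
    (S : Matrix (Fin n) (Fin n) ℝ) (hS : S.PosDef)
    (η : ℕ → ℝ)
    (hη : ∀ k, η k = eigMin S hS.1 / (eigMax (U k) (hU k).1 + eigMax S hS.1) ^ 2)
    (A : ℕ → Matrix (Fin n) (Fin n) ℝ)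
    (hA : ∀ k, A k = 1 - η k • U k - η k • S) :
    ∀ k, ‖Matrix.toEuclideanCLM (𝕜 := ℝ) (A k)‖ ≤
        Real.sqrt (1 - eigMin S hS.1 ^ 2 / (1 + eigMax S hS.1) ^ 2) ∧
      Real.sqrt (1 - eigMin S hS.1 ^ 2 / (1 + eigMax S hS.1) ^ 2) < 1 := by
  haveI : Nonempty (Fin n) := ⟨⟨0, hn⟩⟩
  intro k
  obtain ⟨i₁⟩ : Nonempty (Fin n) := inferInstance
  set m := eigMin S hS.1 with hmdef
  set Mx := eigMax S hS.1 with hMxdef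
  set a := eigMax (U k) (hU k).1 with hadef
  have hmpos : 0 < m := eigMin_pos hS
  have hmM : m ≤ Mx := (eigMin_le hS.1 i₁).trans (le_eigMax hS.1 i₁)
  have ha0 : 0 ≤ a := le_trans ((hU k).eigenvalues_nonneg i₁) (le_eigMax (hU k).1 i₁)
  -- a ≤ 1
  have ha1 : a ≤ 1 := by
    refine ciSup_le fun j => ?_
    have hv1 : ‖(hU k).1.eigenvectorBasis j‖ = 1 := (hU k).1.eigenvectorBasis.orthonormal.1 j
    set v := (hU k).1.eigenvectorBasis j with hvdef
    have hval := eig_eq_inner (hU k).1 j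
    have hq : (inner ℝ v (Matrix.toEuclideanCLM (𝕜 := ℝ) (U k) v) : ℝ)
        = (inner ℝ (Φ k) v : ℝ) * (inner ℝ (Φ k) v : ℝ) := by
      have happ : ∀ i, (Matrix.toEuclideanCLM (𝕜 := ℝ) (U k) v) i = (U k *ᵥ ⇑v) i :=
        fun i => rfl
      have : (inner ℝ v (Matrix.toEuclideanCLM (𝕜 := ℝ) (U k) v) : ℝ)
          = ∑ i, v i * (U k *ᵥ ⇑v) i := by
        rw [PiLp.inner_apply]
        simp [happ, mul_comm]
      rw [this, hUdef k]
      simp only [Matrix.mulVec, Matrix.vecMulVec_apply, dotProduct, PiLp.inner_apply,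
        RCLike.inner_apply, starRingEnd_apply, star_trivial,
        Finset.mul_sum, Finset.sum_mul]
      rw [Finset.sum_comm]
      exact Finset.sum_congr rfl fun i _ => Finset.sum_congr rfl fun l _ => by ring
    have hcs := real_inner_mul_inner_self_le (Φ k) v
    rw [hval, hq]
    have h1 : (inner ℝ (Φ k) (Φ k) : ℝ) ≤ 1 := by
      rw [real_inner_self_eq_norm_sq]
      nlinarith [hΦ k, norm_nonneg (Φ k)]
    have h2 : (inner ℝ v v : ℝ) = 1 := by rw [real_inner_self_eq_norm_sq, hv1]; norm_num
    calc (inner ℝ (Φ k) v : ℝ) * (inner ℝ (Φ k) v : ℝ) ≤ (inner ℝ (Φ k) (Φ k) : ℝ) * (inner ℝ v v : ℝ) := hcs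
      _ ≤ 1 := by rw [h2]; simpa using h1
  set L := a + Mx with hLdef
  have hL : 0 < L := by dsimp [L]; linarith
  have hLle : L ≤ 1 + Mx := by dsimp [L]; linarith
  have hmL : m ≤ L := by dsimp [L]; linarith
  have hηk : η k = m / L ^ 2 := hη k
  have hη0 : 0 < η k := by rw [hηk]; positivity
  -- hermitian
  have hU0 : (0:ℝ) ≤ eigMin (U k) (hU k).1 := le_ciInf fun i => (hU k).eigenvalues_nonneg i
  have hAH : (A k).IsHermitian := by
    rw [hA k]
    refine (Matrix.isHermitian_one.sub ?_).sub ?_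
    · show (η k • U k)ᴴ = η k • U k
      rw [Matrix.conjTranspose_smul, star_trivial, (hU k).1.eq]
    · show (η k • S)ᴴ = η k • S
      rw [Matrix.conjTranspose_smul, star_trivial, hS.1.eq]
  -- eigenvalue bounds for A k
  have key : ∀ i, |hAH.eigenvalues i| ≤ 1 - m^2 / L^2 := by
    intro i
    have hv1 : ‖hAH.eigenvectorBasis i‖ = 1 := hAH.eigenvectorBasis.orthonormal.1 i
    set v := hAH.eigenvectorBasis i with hvdef
    set u := (inner ℝ v (Matrix.toEuclideanCLM (𝕜 := ℝ) (U k) v) : ℝ) with hudef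
    set s := (inner ℝ v (Matrix.toEuclideanCLM (𝕜 := ℝ) S v) : ℝ) with hsdef
    have hCLM : Matrix.toEuclideanCLM (𝕜 := ℝ) (A k)
        = 1 - η k • Matrix.toEuclideanCLM (𝕜 := ℝ) (U k)
          - η k • Matrix.toEuclideanCLM (𝕜 := ℝ) S := by
      rw [hA k, map_sub, map_sub, _root_.map_smul, _root_.map_smul, _root_.map_one]
    have hval : hAH.eigenvalues i = 1 - η k * u - η k * s := by
      rw [eig_eq_inner hAH i, hCLM]
      simp only [ContinuousLinearMap.sub_apply, ContinuousLinearMap.smul_apply,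
        ContinuousLinearMap.one_apply, inner_sub_right, real_inner_smul_right]
      have hvv : (inner ℝ v v : ℝ) = 1 := by rw [real_inner_self_eq_norm_sq, hv1]; norm_num
      rw [← hvdef, hvv, hudef, hsdef]
    have hu1 : u ≤ a := by have := rayleigh_le_s8 (hU k).1 v; rw [hv1] at this; simpa using this
    have hu0 : 0 ≤ u := by
      have := rayleigh_ge_s8 (hU k).1 v
      rw [hv1] at this; nlinarith
    have hs1 : s ≤ Mx := by have := rayleigh_le_s8 hS.1 v; rw [hv1] at this; simpa using this
    have hs0 : m ≤ s := by have := rayleigh_ge_s8 hS.1 v; rw [hv1] at this; simpa using this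
    have heL : η k * L = m / L := by rw [hηk]; field_simp
    have hem : η k * m = m^2 / L^2 := by rw [hηk]; field_simp
    have hdiv1 : m / L ≤ 1 := (div_le_one hL).2 hmL
    have hdiv2 : m^2 / L^2 ≤ 1 := by
      rw [div_le_one (by positivity)]
      nlinarith
    rw [hval, abs_le]
    constructor
    · have h3 : η k * (u + s) ≤ η k * L := by
        apply mul_le_mul_of_nonneg_left _ hη0.le
        dsimp [L]; linarith
      rw [heL] at h3
      nlinarith
    · have h4 : η k * m ≤ η k * (u + s) := by
        apply mul_le_mul_of_nonneg_left _ hη0.le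
        linarith
      rw [hem] at h4
      nlinarith
  -- compare bounds
  have hc0 : 0 ≤ 1 - m^2 / (1 + Mx)^2 := by
    have hm1M : m ≤ 1 + Mx := by linarith
    have : m^2 / (1+Mx)^2 ≤ 1 := by
      rw [div_le_one (pow_pos (show (0:ℝ) < 1 + Mx by linarith) 2)]
      nlinarith
    linarith
  have hbd : 1 - m^2 / L^2 ≤ Real.sqrt (1 - m^2 / (1 + Mx)^2) := by
    have h1 : m^2 / (1+Mx)^2 ≤ m^2 / L^2 := by
      apply div_le_div_of_nonneg_left (sq_nonneg m) (pow_pos hL 2)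
      nlinarith
    have h2 : 1 - m^2 / (1+Mx)^2 ≤ Real.sqrt (1 - m^2 / (1 + Mx)^2) := by
      rw [Real.le_sqrt hc0 (by linarith)]
      nlinarith [div_nonneg (sq_nonneg m) (sq_nonneg (1+Mx))]
    linarith
  refine ⟨norm_clm_le hAH (Real.sqrt_nonneg _) fun i => (key i).trans hbd, ?_⟩
  refine (Real.sqrt_lt' one_pos).2 ?_
  have : 0 < m^2 / (1+Mx)^2 := div_pos (pow_pos hmpos 2) (pow_pos (by linarith) 2)
  norm_num
  linarith
end

section
/- Linear regression form of the ranging equation: under the substitutions p_{ij}(t_k) = p_{ij}(t₀) + p_i(t_k) − R p_j(t_k) and u_{ij}(t_k) = u_i(t_k) − R u_j(t_k), the cosine-law identity u_{ij}(t_k)^T p_{ij}(t_k) = ½(d(t_{k+1})² − d(t_k)² − ‖u_{ij}(t_k)‖²) is equivalent to a relation linear in the unknown parameter vector Θ = (p_{ij}(t₀), R^T(p_{i,h}(t₀) − p_{j,h}(t₀)), cos θ₀, sin θ₀): namely y(t_k) = Θ^T Φ(t_k) for measurable y(t_k) and regressor Φ(t_k). -/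
open Matrix

/-- linear-regression form of the ranging equation. Under the
substitutions `p_{ij}(t_k) = p_{ij}(t₀) + p_i(t_k) − R p_j(t_k)` and
`u_{ij}(t_k) = u_i(t_k) − R u_j(t_k)` (with `R` the rotation by the unknown initial
relative yaw `θ₀`, acting on horizontal components), the cosine-law identity
`u_{ij}(t_k)ᵀ p_{ij}(t_k) = ½(d(t_{k+1})² − d(t_k)² − ‖u_{ij}(t_k)‖²)` is equivalent
to the relation `y(t_k) = Θᵀ Φ(t_k)`, which is linear in the unknown parameter
vector `Θ = (p_{ij}(t₀), Rᵀ p_{ij,h}(t₀), cos θ₀, sin θ₀)`, where `y(t_k)` and the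
regressor `Φ(t_k)` are built only from measurable quantities
(`d`, `p_i`, `p_j`, `u_i`, `u_j`). -/
theorem stmt14 (θ₀ : ℝ)
    (R2 : Matrix (Fin 2) (Fin 2) ℝ)
    (hR2 : R2 = !![Real.cos θ₀, -Real.sin θ₀; Real.sin θ₀, Real.cos θ₀])
    (R3 : Matrix (Fin 3) (Fin 3) ℝ)
    (hR3 : R3 = !![Real.cos θ₀, -Real.sin θ₀, 0; Real.sin θ₀, Real.cos θ₀, 0; 0, 0, 1])
    (p0 : Fin 3 → ℝ)
    (pi pj pij : ℕ → Fin 3 → ℝ)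
    (hpij : ∀ k, pij k = p0 + pi k - R3.mulVec (pj k))
    (ui uj uij : ℕ → Fin 3 → ℝ)
    (hui : ∀ k, ui k = pi (k + 1) - pi k)
    (huj : ∀ k, uj k = pj (k + 1) - pj k)
    (huij : ∀ k, uij k = ui k - R3.mulVec (uj k))
    (d : ℕ → ℝ)  -- the measured inter-robot distances
    (a b : ℕ → ℝ)
    (ha : ∀ k, a k = (ui k 0 * pj k 0 + ui k 1 * pj k 1)
      + (pi k 0 * uj k 0 + pi k 1 * uj k 1)
      + (ui k 0 * uj k 0 + ui k 1 * uj k 1))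
    (hb : ∀ k, b k = (pj k 0 * ui k 1 - pj k 1 * ui k 0)
      + (uj k 0 * pi k 1 - uj k 1 * pi k 0)
      + (uj k 0 * ui k 1 - uj k 1 * ui k 0))
    (Φ : ℕ → Fin 7 → ℝ)
    (hΦ : ∀ k, Φ k = ![ui k 0, ui k 1, ui k 2 - uj k 2,
      -(uj k 0), -(uj k 1), -(a k), -(b k)])
    (Θ : Fin 7 → ℝ)
    (hΘ : Θ = ![p0 0, p0 1, p0 2,
      (R2ᵀ.mulVec ![p0 0, p0 1]) 0, (R2ᵀ.mulVec ![p0 0, p0 1]) 1,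
      Real.cos θ₀, Real.sin θ₀])
    (y : ℕ → ℝ)
    (hy : ∀ k, y k = (1 / 2) * (d (k + 1) ^ 2 - d k ^ 2
        - ui k ⬝ᵥ ui k - uj k ⬝ᵥ uj k)
      - ui k ⬝ᵥ pi k - uj k ⬝ᵥ pj k
      + ui k 2 * pj k 2 + pi k 2 * uj k 2 + ui k 2 * uj k 2) :
    ∀ k, (uij k ⬝ᵥ pij k
        = (1 / 2) * (d (k + 1) ^ 2 - d k ^ 2 - uij k ⬝ᵥ uij k))
      ↔ y k = Θ ⬝ᵥ Φ k := by

  intro k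
  have hsc := Real.sin_sq_add_cos_sq θ₀
  simp only [hpij, huij, hΦ, hΘ, hy, ha, hb, hR2, hR3]
  simp only [Matrix.cons_dotProduct, dotProduct_of_isEmpty, Matrix.head_cons,
    Matrix.tail_cons]
  simp only [dotProduct, Matrix.mulVec, Matrix.transpose_apply,
    Fin.sum_univ_three, Fin.sum_univ_two, Matrix.cons_val',
    Matrix.cons_val_zero, Matrix.cons_val_one, Matrix.head_cons, Matrix.head_fin_const,
    Matrix.empty_val', Matrix.cons_val_fin_one, Pi.add_apply, Pi.sub_apply,
    Matrix.of_apply, Matrix.cons_val_two, Matrix.tail_cons, Matrix.cons_dotProduct,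
    dotProduct_of_isEmpty, Matrix.head_cons, Matrix.tail_cons]
  constructor <;> intro h <;>
    linear_combination (-1 : ℝ) * h +
      ((1/2) * uj k 0 ^ 2 + (1/2) * uj k 1 ^ 2 + pj k 0 * uj k 0 + pj k 1 * uj k 1) * hsc
end

section
/- If the velocities of both robots are constant over all sampling times (u_i(t_k) = u_i and u_j(t_k) = u_j for all k), then the first three rows of every regressor Φ_{ij}(t_k) are the same fixed vector, so the top-left 3×3 block of the Gram matrix S_{ij} has rank at most 1, hence S_{ij} is not full rank and the relative position is unobservable. -/
open Matrix

lemma vecMul_vecMulVec_aux {n p : Type*} [Fintype n] (x a : n → ℝ) (b : p → ℝ) :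
    x ᵥ* vecMulVec a b = (x ⬝ᵥ a) • b := by
  ext j
  simp [vecMul, vecMulVec, dotProduct, Finset.sum_mul, mul_assoc]

lemma vecMul_sum_aux {n p ι : Type*} [Fintype n] (s : Finset ι) (x : n → ℝ)
    (A : ι → Matrix n p ℝ) : x ᵥ* (∑ k ∈ s, A k) = ∑ k ∈ s, x ᵥ* A k := by
  classical
  induction s using Finset.induction with
  | empty => simp [vecMul]
  | insert _ _ h ih => rw [Finset.sum_insert h, Finset.sum_insert h, Matrix.vecMul_add, ih]

lemma rank_vecMulVec_le_aux {n p : Type*} [Fintype n] [Fintype p] [DecidableEq p]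
    (w : n → ℝ) (v : p → ℝ) : (vecMulVec w v).rank ≤ 1 := by
  rw [Matrix.vecMulVec_eq (Fin 1)]
  calc (Matrix.replicateCol (Fin 1) w * Matrix.replicateRow (Fin 1) v).rank
      ≤ (Matrix.replicateCol (Fin 1) w).rank := Matrix.rank_mul_le_left _ _
    _ ≤ Fintype.card (Fin 1) := Matrix.rank_le_card_width _
    _ = 1 := by simp

/-- if the velocities of both robots are constant
(`uᵢ(t_k) = uᵢ`, `uⱼ(t_k) = uⱼ` for all `k`), then the first three components of
every regressor `Φᵢⱼ(t_k)` form the same fixed vector, so the top-left `3×3` block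
of the Gram matrix `S = ∑ₖ Φₖ Φₖᵀ` has rank at most `1`; hence `S` is not full rank
(the relative position is unobservable). -/
theorem stmt15 {m : ℕ} (ui uj : ℕ → Fin 3 → ℝ) (uic ujc : Fin 3 → ℝ)
    (hui : ∀ k, ui k = uic) (huj : ∀ k, uj k = ujc)
    (Φ : ℕ → Fin 7 → ℝ)
    (hΦ : ∀ k, Φ k 0 = ui k 0 ∧ Φ k 1 = ui k 1 ∧ Φ k 2 = ui k 2 - uj k 2)
    (S : Matrix (Fin 7) (Fin 7) ℝ)
    (hS : S = ∑ k ∈ Finset.range m, vecMulVec (Φ k) (Φ k)) :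
    (S.submatrix (Fin.castLE (by norm_num : (3:ℕ) ≤ 7))
        (Fin.castLE (by norm_num : (3:ℕ) ≤ 7))).rank ≤ 1 ∧ S.det = 0 := by
  set v0 : ℝ := uic 0 with hv0
  set v1 : ℝ := uic 1 with hv1
  have hΦ0 : ∀ k, Φ k 0 = v0 := fun k => by rw [(hΦ k).1, hui]
  have hΦ1 : ∀ k, Φ k 1 = v1 := fun k => by rw [(hΦ k).2.1, hui]
  constructor
  · -- rank part
    set w : Fin 3 → ℝ := ![v0, v1, uic 2 - ujc 2] with hw
    have hrestr : ∀ k, (Φ k) ∘ (Fin.castLE (by norm_num : (3:ℕ) ≤ 7)) = w := by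
      intro k
      funext i
      fin_cases i
      · simpa [hw] using hΦ0 k
      · simpa [hw] using hΦ1 k
      · show Φ k 2 = uic 2 - ujc 2
        rw [(hΦ k).2.2, hui, huj]
    have hsub : S.submatrix (Fin.castLE (by norm_num : (3:ℕ) ≤ 7))
        (Fin.castLE (by norm_num : (3:ℕ) ≤ 7)) = vecMulVec ((m : ℝ) • w) w := by
      rw [hS]
      ext i j
      simp only [Matrix.submatrix_apply, Matrix.sum_apply, vecMulVec_apply]
      have : ∀ k ∈ Finset.range m,
          Φ k (Fin.castLE (by norm_num : (3:ℕ) ≤ 7) i) *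
            Φ k (Fin.castLE (by norm_num : (3:ℕ) ≤ 7) j) = w i * w j := by
        intro k _
        rw [← hrestr k]; rfl
      rw [Finset.sum_congr rfl this, Finset.sum_const, Finset.card_range]
      simp [mul_assoc]
    rw [hsub]
    exact rank_vecMulVec_le_aux _ _
  · -- det part
    rw [← Matrix.exists_vecMul_eq_zero_iff]
    by_cases h0 : v0 = 0
    · refine ⟨Pi.single 0 1, ?_, ?_⟩
      · intro h
        have := congrFun h (0 : Fin 7)
        simp at this
      · rw [hS, vecMul_sum_aux]
        apply Finset.sum_eq_zero
        intro k _
        rw [vecMul_vecMulVec_aux]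
        have : (Pi.single (0 : Fin 7) (1:ℝ)) ⬝ᵥ (Φ k) = 0 := by
          rw [single_dotProduct, hΦ0, h0, one_mul]
        rw [this, zero_smul]
    · refine ⟨Pi.single 0 v1 - Pi.single 1 v0, ?_, ?_⟩
      · intro h
        have := congrFun h (1 : Fin 7)
        simp [Pi.single_apply] at this
        exact h0 this
      · rw [hS, vecMul_sum_aux]
        apply Finset.sum_eq_zero
        intro k _
        rw [vecMul_vecMulVec_aux]
        have : (Pi.single (0 : Fin 7) v1 - Pi.single 1 v0) ⬝ᵥ (Φ k) = 0 := by
          rw [sub_dotProduct, single_dotProduct, single_dotProduct,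
            hΦ0, hΦ1]
          ring
        rw [this, zero_smul]
end
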